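/- arXiv:0809.4049 — 2 statements merged into one kernel-verified Lean document; each statement's English description precedes it below -/
import Mathlib

section
/- Let n ≥ 1 and N ≥ 0 be integers, and let β ∈ [0,1] be a point at which the Bernoulli polynomial B_{n+1} attains its minimum on [0,1]. Then every real-valued trigonometric polynomial Q of degree at most N satisfying Q(x) ≤ 𝓑_{n+1}(x) for all x ∈ ℝ satisfies ∫₀¹ (𝓑_{n+1}(x) − Q(x)) dx ≥ −B_{n+1}(β)/(N+1)^{n+1}. -/
open MeasureTheory

/-- The `m`-th Bernoulli polynomial evaluated at a real number `x`,
with the generating function `t e^{xt}/(e^t - 1) = ∑ B_m(x) t^m / m!`. -/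
noncomputable def bernoulliPoly (m : ℕ) (x : ℝ) : ℝ :=
  Polynomial.aeval x (Polynomial.bernoulli m)

lemma bp_map (m : ℕ) (x : ℝ) :
    bernoulliPoly m x = ((Polynomial.bernoulli m).map (algebraMap ℚ ℝ)).eval x := by
  rw [bernoulliPoly, Polynomial.aeval_def, Polynomial.eval₂_eq_eval_map]

lemma bp_zero (x : ℝ) : bernoulliPoly 0 x = 1 := by
  simp [bernoulliPoly]

lemma bp_one_eq_zero {m : ℕ} (hm : m ≠ 1) : bernoulliPoly m 1 = bernoulliPoly m 0 := by
  rw [bp_map, bp_map, Polynomial.eval_one_map, Polynomial.eval_zero_map,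
    Polynomial.bernoulli_eval_one, Polynomial.bernoulli_eval_zero,
    bernoulli_eq_bernoulli'_of_ne_one hm]

lemma bp_hasDerivAt (k : ℕ) (x : ℝ) :
    HasDerivAt (bernoulliPoly (k+1)) (((k:ℝ)+1) * bernoulliPoly k x) x := by
  have h := Polynomial.hasDerivAt_aeval (q := Polynomial.bernoulli (k+1)) x
  rw [Polynomial.derivative_bernoulli_add_one] at h
  have : (Polynomial.aeval x) (((k : Polynomial ℚ) + 1) * Polynomial.bernoulli k)
      = ((k:ℝ)+1) * bernoulliPoly k x := by
    simp [bernoulliPoly, map_mul]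
  rw [this] at h
  exact h

lemma bp_cont (m : ℕ) : Continuous (bernoulliPoly m) :=
  (((Polynomial.bernoulli m).map (algebraMap ℚ ℝ)).continuous).congr
    (fun x => (bp_map m x).symm)

lemma bp_integral_zero (k : ℕ) : ∫ x in (0:ℝ)..1, bernoulliPoly (k+1) x = 0 := by
  have hF : ∀ x ∈ Set.uIcc (0:ℝ) 1,
      HasDerivAt (fun y => bernoulliPoly (k+2) y / ((k:ℝ)+2)) (bernoulliPoly (k+1) x) x := by
    intro x _
    have h := (bp_hasDerivAt (k+1) x).div_const ((k:ℝ)+2)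
    refine h.congr_deriv ?_
    push_cast
    field_simp
    ring
  rw [intervalIntegral.integral_eq_sub_of_hasDerivAt hF
    ((bp_cont (k+1)).intervalIntegrable 0 1)]
  rw [bp_one_eq_zero (by omega)]
  ring

lemma affine_hasDerivAt (m : ℕ) (j y : ℝ) :
    HasDerivAt (fun y : ℝ => (y + j) / m) (1 / (m:ℝ)) y := by
  simpa using ((hasDerivAt_id y).add_const j).div_const (m:ℝ)

lemma bp_comp_hasDerivAt (k m : ℕ) (j y : ℝ) :
    HasDerivAt (fun y : ℝ => bernoulliPoly (k+1) ((y + j) / m))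
      (((k:ℝ)+1) * bernoulliPoly k ((y + j)/m) * (1 / (m:ℝ))) y :=
  by have := (bp_hasDerivAt k ((y + j)/m)).comp y (affine_hasDerivAt m j y); exact this

lemma raabe (m k : ℕ) (hm : 0 < m) (x : ℝ) :
    ((m:ℝ))^k * ∑ j ∈ Finset.range m, bernoulliPoly k ((x + j) / m)
      = m * bernoulliPoly k x := by
  have hm0 : ((m:ℝ)) ≠ 0 := Nat.cast_ne_zero.mpr hm.ne'
  induction k generalizing x with
  | zero => simp [bp_zero]
  | succ k ih =>
    set h : ℝ → ℝ := fun y =>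
      (m:ℝ)^(k+1) * ∑ j ∈ Finset.range m, bernoulliPoly (k+1) ((y + j)/m)
        - m * bernoulliPoly (k+1) y with hh
    have hderiv : ∀ y : ℝ, HasDerivAt h 0 y := by
      intro y
      have hsum : HasDerivAt
          (fun y => ∑ j ∈ Finset.range m, bernoulliPoly (k+1) ((y + j)/m))
          (∑ j ∈ Finset.range m, ((k:ℝ)+1) * bernoulliPoly k ((y + j)/m) * (1/(m:ℝ))) y :=
        HasDerivAt.fun_sum (fun j _ => bp_comp_hasDerivAt k m j y)
      have hfull := (hsum.const_mul ((m:ℝ)^(k+1))).sub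
        ((bp_hasDerivAt k y).const_mul (m:ℝ))
      refine hfull.congr_deriv ?_
      have hS : ∑ j ∈ Finset.range m, ((k:ℝ)+1) * bernoulliPoly k ((y + j)/m) * (1/(m:ℝ))
          = (((k:ℝ)+1) / m) * ∑ j ∈ Finset.range m, bernoulliPoly k ((y + j)/m) := by
        rw [Finset.mul_sum]; exact Finset.sum_congr rfl (fun j _ => by ring)
      rw [hS]
      have ihy := ih y
      field_simp
      linear_combination ((k:ℝ)+1) * (m:ℝ) * ihy
    -- h is constant
    have hconst : ∀ y : ℝ, h y = h 0 :=
      fun y => is_const_of_deriv_eq_zero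
        (fun z => (hderiv z).differentiableAt) (fun z => (hderiv z).deriv) y 0
    -- the integral of h over [0,1] is 0
    have hint : ∫ t in (0:ℝ)..1, h t = 0 := by
      have hcont : ∀ j : ℕ, Continuous (fun t : ℝ => bernoulliPoly (k+1) ((t + j)/m)) :=
        fun j => (bp_cont (k+1)).comp (by continuity)
      have hI : ∀ j : ℕ, ∫ t in (0:ℝ)..1, bernoulliPoly (k+1) ((t + j)/m)
          = ((m:ℝ)/((k:ℝ)+2)) * bernoulliPoly (k+2) (((j:ℝ)+1)/m)
            - ((m:ℝ)/((k:ℝ)+2)) * bernoulliPoly (k+2) ((j:ℝ)/m) := by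
        intro j
        have hF : ∀ t ∈ Set.uIcc (0:ℝ) 1,
            HasDerivAt (fun y : ℝ => ((m:ℝ)/((k:ℝ)+2)) * bernoulliPoly (k+2) ((y + j)/m))
              (bernoulliPoly (k+1) ((t + j)/m)) t := by
          intro t _
          have := (bp_comp_hasDerivAt (k+1) m j t).const_mul ((m:ℝ)/((k:ℝ)+2))
          refine this.congr_deriv ?_
          push_cast
          field_simp
          ring
        rw [intervalIntegral.integral_eq_sub_of_hasDerivAt hF
          ((hcont j).intervalIntegrable 0 1)]
        norm_num [add_comm]
      have hsumI : ∑ j ∈ Finset.range m,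
          (∫ t in (0:ℝ)..1, bernoulliPoly (k+1) ((t + j)/m)) = 0 := by
        have := Finset.sum_range_sub
          (fun j : ℕ => ((m:ℝ)/((k:ℝ)+2)) * bernoulliPoly (k+2) ((j:ℝ)/m)) m
        calc ∑ j ∈ Finset.range m, (∫ t in (0:ℝ)..1, bernoulliPoly (k+1) ((t + j)/m))
            = ∑ j ∈ Finset.range m,
              (((m:ℝ)/((k:ℝ)+2)) * bernoulliPoly (k+2) ((((j:ℕ)+1:ℕ):ℝ)/m)
               - ((m:ℝ)/((k:ℝ)+2)) * bernoulliPoly (k+2) ((j:ℝ)/m)) := by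
              refine Finset.sum_congr rfl (fun j _ => ?_)
              rw [hI j]; push_cast; ring_nf
          _ = ((m:ℝ)/((k:ℝ)+2)) * bernoulliPoly (k+2) ((m:ℝ)/m)
               - ((m:ℝ)/((k:ℝ)+2)) * bernoulliPoly (k+2) ((0:ℝ)/m) := by
              exact_mod_cast this
          _ = 0 := by
              rw [div_self hm0, zero_div, bp_one_eq_zero (by omega)]; ring
      calc ∫ t in (0:ℝ)..1, h t
          = (m:ℝ)^(k+1) * ∑ j ∈ Finset.range m,
              (∫ t in (0:ℝ)..1, bernoulliPoly (k+1) ((t + j)/m))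
            - m * ∫ t in (0:ℝ)..1, bernoulliPoly (k+1) t := by
            rw [hh]
            rw [intervalIntegral.integral_sub, intervalIntegral.integral_const_mul,
              intervalIntegral.integral_const_mul, intervalIntegral.integral_finset_sum]
            · exact fun j _ => (hcont j).intervalIntegrable 0 1
            · exact (continuous_const.mul (continuous_finset_sum _
                (fun j _ => hcont j))).intervalIntegrable 0 1
            · exact (continuous_const.mul (bp_cont (k+1))).intervalIntegrable 0 1
        _ = 0 := by rw [hsumI, bp_integral_zero]; ring
    -- conclude
    have h0 : h 0 = 0 := by
      have : ∫ t in (0:ℝ)..1, h t = h 0 := by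
        rw [intervalIntegral.integral_congr (g := fun _ => h 0) (fun t _ => hconst t)]
        simp only [intervalIntegral.integral_const, sub_zero, one_smul]
      rw [← this, hint]
    have hx : h x = 0 := (hconst x).trans h0
    have hx' : (m:ℝ)^(k+1) * ∑ j ∈ Finset.range m, bernoulliPoly (k+1) ((x + j)/m)
        - m * bernoulliPoly (k+1) x = 0 := hx
    linarith

open Complex in
lemma exp_term_cont (k : ℤ) : Continuous (fun x : ℝ =>
    Complex.exp (2 * (Real.pi : ℂ) * Complex.I * (k : ℂ) * (x : ℂ))) :=
  Complex.continuous_exp.comp (continuous_const.mul Complex.continuous_ofReal)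

open Complex in
lemma integral_exp_term {k : ℤ} (hk : k ≠ 0) :
    (∫ x in (0:ℝ)..1, Complex.exp (2 * (Real.pi : ℂ) * Complex.I * (k : ℂ) * (x : ℂ))) = 0 := by
  have hc : 2 * (Real.pi : ℂ) * Complex.I * (k : ℂ) ≠ 0 := by
    simp [Real.pi_ne_zero, Complex.I_ne_zero, hk]
  rw [integral_exp_mul_complex hc]
  have h1 : 2 * (Real.pi : ℂ) * Complex.I * (k : ℂ) * (1:ℝ) = (k : ℂ) * (2 * (Real.pi:ℂ) * Complex.I) := by
    push_cast; ring
  have h0 : 2 * (Real.pi : ℂ) * Complex.I * (k : ℂ) * ((0:ℝ):ℂ) = 0 := by push_cast; ring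
  rw [h1, h0, Complex.exp_int_mul_two_pi_mul_I, Complex.exp_zero, sub_self, zero_div]

lemma integral_trig (N : ℕ) (c : ℤ → ℂ) (Q : ℝ → ℝ)
    (hQ : ∀ x : ℝ, (Q x : ℂ) = ∑ k ∈ Finset.Icc (-(N : ℤ)) (N : ℤ),
      c k * Complex.exp (2 * (Real.pi : ℂ) * Complex.I * (k : ℂ) * (x : ℂ))) :
    ((∫ x in (0:ℝ)..1, Q x : ℝ) : ℂ) = c 0 := by
  have h1 : ((∫ x in (0:ℝ)..1, Q x : ℝ) : ℂ) = ∫ x in (0:ℝ)..1, (Q x : ℂ) := by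
    rw [intervalIntegral.integral_ofReal]
  rw [h1]
  have h2 : (∫ x in (0:ℝ)..1, (Q x : ℂ))
      = ∑ k ∈ Finset.Icc (-(N : ℤ)) (N : ℤ),
        ∫ x in (0:ℝ)..1, c k * Complex.exp (2 * (Real.pi : ℂ) * Complex.I * (k : ℂ) * (x : ℂ)) := by
    rw [intervalIntegral.integral_congr (g := fun x => ∑ k ∈ Finset.Icc (-(N : ℤ)) (N : ℤ),
      c k * Complex.exp (2 * (Real.pi : ℂ) * Complex.I * (k : ℂ) * (x : ℂ)))
      (fun x _ => hQ x)]
    exact intervalIntegral.integral_finset_sum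
      (fun k _ => ((continuous_const.mul (exp_term_cont k)).intervalIntegrable 0 1))
  rw [h2]
  rw [Finset.sum_eq_single 0]
  · rw [intervalIntegral.integral_const_mul]
    have : ∀ x : ℝ, 2 * (Real.pi : ℂ) * Complex.I * ((0:ℤ) : ℂ) * (x : ℂ) = 0 := by
      intro x; push_cast; ring
    simp only [this, Complex.exp_zero]
    simp
  · intro k _ hk
    rw [intervalIntegral.integral_const_mul, integral_exp_term hk, mul_zero]
  · intro h
    exact absurd (by simp : (0:ℤ) ∈ Finset.Icc (-(N:ℤ)) (N:ℤ)) h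

lemma hNC (N : ℕ) : ((N:ℂ)+1) ≠ 0 := by
  have : ((N:ℝ)+1) ≠ 0 := by positivity
  exact_mod_cast this

lemma arg_split (N : ℕ) (k : ℤ) (β : ℝ) (j : ℕ) :
    2*(Real.pi:ℂ)*Complex.I*(k:ℂ)*((((β + (j:ℕ))/((N:ℝ)+1)) : ℝ) : ℂ)
      = 2*(Real.pi:ℂ)*Complex.I*(k:ℂ)*(β:ℂ)/((N:ℂ)+1)
        + (j:ℕ) * (2*(Real.pi:ℂ)*Complex.I*(k:ℂ)/((N:ℂ)+1)) := by
  have hN := hNC N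
  push_cast
  field_simp

lemma pow_exp_one (N : ℕ) (k : ℤ) :
    (Complex.exp (2*(Real.pi:ℂ)*Complex.I*(k:ℂ)/((N:ℂ)+1)))^(N+1) = 1 := by
  rw [← Complex.exp_nat_mul]
  have : ((N+1 : ℕ):ℂ) * (2*(Real.pi:ℂ)*Complex.I*(k:ℂ)/((N:ℂ)+1)) = (k:ℂ)*(2*(Real.pi:ℂ)*Complex.I) := by
    have hN := hNC N
    push_cast
    field_simp
  rw [this, Complex.exp_int_mul_two_pi_mul_I]

lemma exp_ne_one (N : ℕ) {k : ℤ} (hk0 : k ≠ 0) (hmem : k ∈ Finset.Icc (-(N:ℤ)) (N:ℤ)) :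
    Complex.exp (2*(Real.pi:ℂ)*Complex.I*(k:ℂ)/((N:ℂ)+1)) ≠ 1 := by
  intro h1
  rw [Complex.exp_eq_one_iff] at h1
  obtain ⟨n, hn⟩ := h1
  have hN := hNC N
  have h2 : (2*(Real.pi:ℂ)*Complex.I) ≠ 0 := by
    simp [Real.pi_ne_zero, Complex.I_ne_zero]
  have hkC : (k:ℂ) = (n:ℂ) * ((N:ℂ)+1) := by
    field_simp at hn
    apply mul_left_cancel₀ h2
    linear_combination (2*(Real.pi:ℂ)*Complex.I) * hn
  have hkZ : k = n * ((N:ℤ)+1) := by exact_mod_cast hkC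
  obtain ⟨h1, h2'⟩ := Finset.mem_Icc.mp hmem
  have hn0 : n ≠ 0 := by rintro rfl; simp at hkZ; exact hk0 hkZ
  have habs : (N:ℤ)+1 ≤ |k| := by
    rw [hkZ, abs_mul, abs_of_nonneg (by positivity : (0:ℤ) ≤ (N:ℤ)+1)]
    nlinarith [Int.one_le_abs hn0]
  have : |k| ≤ (N:ℤ) := abs_le.mpr ⟨h1, h2'⟩
  omega

lemma sample_sum (N : ℕ) (c : ℤ → ℂ) (Q : ℝ → ℝ)
    (hQ : ∀ x : ℝ, (Q x : ℂ) = ∑ k ∈ Finset.Icc (-(N : ℤ)) (N : ℤ),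
      c k * Complex.exp (2 * (Real.pi : ℂ) * Complex.I * (k : ℂ) * (x : ℂ)))
    (β : ℝ) :
    ((∑ j ∈ Finset.range (N+1), Q ((β + (j:ℕ))/((N:ℝ)+1)) : ℝ) : ℂ)
      = (((N:ℝ)+1 : ℝ) : ℂ) * c 0 := by
  have hcast : ((∑ j ∈ Finset.range (N+1), Q ((β + (j:ℕ))/((N:ℝ)+1)) : ℝ) : ℂ)
      = ∑ j ∈ Finset.range (N+1), ((Q ((β + (j:ℕ))/((N:ℝ)+1)) : ℝ) : ℂ) := by
    push_cast; rfl
  rw [hcast]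
  simp_rw [hQ]
  rw [Finset.sum_comm]
  have hterm : ∀ k ∈ Finset.Icc (-(N:ℤ)) (N:ℤ),
      (∑ j ∈ Finset.range (N+1),
        c k * Complex.exp (2*(Real.pi:ℂ)*Complex.I*(k:ℂ)*((((β + (j:ℕ))/((N:ℝ)+1)) : ℝ) : ℂ)))
      = if k = 0 then (((N:ℝ)+1 : ℝ) : ℂ) * c 0 else 0 := by
    intro k hmem
    have hsplit : ∀ j : ℕ,
        c k * Complex.exp (2*(Real.pi:ℂ)*Complex.I*(k:ℂ)*((((β + (j:ℕ))/((N:ℝ)+1)) : ℝ) : ℂ))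
        = (c k * Complex.exp (2*(Real.pi:ℂ)*Complex.I*(k:ℂ)*(β:ℂ)/((N:ℂ)+1)))
            * (Complex.exp (2*(Real.pi:ℂ)*Complex.I*(k:ℂ)/((N:ℂ)+1)))^j := by
      intro j
      rw [arg_split, Complex.exp_add, Complex.exp_nat_mul]
      ring
    simp_rw [hsplit]
    rw [← Finset.mul_sum]
    by_cases hk0 : k = 0
    · subst hk0
      simp only [Int.cast_zero, mul_zero, zero_mul, zero_div, mul_zero, Complex.exp_zero,
        one_pow, mul_one, Finset.sum_const, Finset.card_range, nsmul_eq_mul, if_pos rfl]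
      push_cast
      ring
    · rw [if_neg hk0]
      rw [geom_sum_eq (exp_ne_one N hk0 hmem), pow_exp_one, sub_self, zero_div, mul_zero]
  rw [Finset.sum_congr rfl hterm, Finset.sum_ite_eq' (Finset.Icc (-(N:ℤ)) (N:ℤ)) 0
    (fun _ => (((N:ℝ)+1 : ℝ) : ℂ) * c 0)]
  simp

/-- The `m`-th Bernoulli periodic function `𝓑_m(x) = B_m(x - ⌊x⌋)`. -/
noncomputable def bernoulliPer (m : ℕ) (x : ℝ) : ℝ :=
  bernoulliPoly m (x - ⌊x⌋)

lemma per_eq {m : ℕ} (hm : m ≠ 1) {x : ℝ} (hx : x ∈ Set.Icc (0:ℝ) 1) :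
    bernoulliPer m x = bernoulliPoly m x := by
  obtain ⟨h0, h1⟩ := hx
  rcases eq_or_lt_of_le h1 with h | h
  · subst h
    rw [bernoulliPer, Int.floor_one]
    norm_num
    exact (bp_one_eq_zero hm).symm
  · rw [bernoulliPer, Int.floor_eq_zero_iff.mpr ⟨h0, h⟩]
    norm_num

/-- `f : ℝ → ℂ` is a trigonometric polynomial of degree at most `N`:
`f x = ∑_{k=-N}^{N} c_k e^{2πikx}`. -/
def IsTrigPoly (N : ℕ) (f : ℝ → ℂ) : Prop :=
  ∃ c : ℤ → ℂ, ∀ x : ℝ,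
    f x = ∑ k ∈ Finset.Icc (-(N : ℤ)) (N : ℤ),
      c k * Complex.exp (2 * (Real.pi : ℂ) * Complex.I * (k : ℂ) * (x : ℂ))

theorem minorant_lower_bound (n N : ℕ) (hn : 1 ≤ n)
    (β : ℝ) (hβmem : β ∈ Set.Icc (0 : ℝ) 1)
    (hβ : ∀ x ∈ Set.Icc (0 : ℝ) 1, bernoulliPoly (n + 1) β ≤ bernoulliPoly (n + 1) x)
    (Q : ℝ → ℝ) (hQtrig : IsTrigPoly N (fun x => (Q x : ℂ)))
    (hQle : ∀ x : ℝ, Q x ≤ bernoulliPer (n + 1) x) :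
    (∫ x in (0 : ℝ)..1, (bernoulliPer (n + 1) x - Q x)) ≥
      -(bernoulliPoly (n + 1) β) / ((N : ℝ) + 1) ^ (n + 1) := by
  obtain ⟨c, hc⟩ := hQtrig
  have hc' : ∀ x : ℝ, (Q x : ℂ) = ∑ k ∈ Finset.Icc (-(N : ℤ)) (N : ℤ),
      c k * Complex.exp (2 * (Real.pi : ℂ) * Complex.I * (k : ℂ) * (x : ℂ)) := hc
  have hm1 : n + 1 ≠ 1 := by omega
  have hNpos : (0:ℝ) < (N:ℝ) + 1 := by positivity
  -- continuity of Q
  have hQcont : Continuous Q := by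
    have hg : Continuous (fun x : ℝ => ∑ k ∈ Finset.Icc (-(N:ℤ)) (N:ℤ),
        c k * Complex.exp (2*(Real.pi:ℂ)*Complex.I*(k:ℂ)*(x:ℂ))) :=
      continuous_finset_sum _ (fun k _ => continuous_const.mul (exp_term_cont k))
    exact (Complex.continuous_re.comp hg).congr
      (fun x => by simp only [Function.comp_apply]; rw [← hc' x, Complex.ofReal_re])
  -- replace periodic by polynomial
  have hint1 : (∫ x in (0:ℝ)..1, (bernoulliPer (n+1) x - Q x))
      = (∫ x in (0:ℝ)..1, (bernoulliPoly (n+1) x - Q x)) := by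
    refine intervalIntegral.integral_congr (fun x hx => ?_)
    rw [per_eq hm1 (by simpa [Set.uIcc_of_le (by norm_num : (0:ℝ) ≤ 1)] using hx)]
  have hsplit : (∫ x in (0:ℝ)..1, (bernoulliPoly (n+1) x - Q x))
      = (∫ x in (0:ℝ)..1, bernoulliPoly (n+1) x) - ∫ x in (0:ℝ)..1, Q x :=
    intervalIntegral.integral_sub ((bp_cont (n+1)).intervalIntegrable 0 1)
      (hQcont.intervalIntegrable 0 1)
  -- sampling identity
  have hintQ := integral_trig N c Q hc'
  have hsamp := sample_sum N c Q hc' β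
  have key : ((N:ℝ)+1) * (∫ x in (0:ℝ)..1, Q x)
      = ∑ j ∈ Finset.range (N+1), Q ((β + (j:ℕ))/((N:ℝ)+1)) := by
    have h := hsamp.trans (by rw [hintQ.symm] :
      ((((N:ℝ)+1 : ℝ)) : ℂ) * c 0 = ((((N:ℝ)+1 : ℝ)) : ℂ) * ((∫ x in (0:ℝ)..1, Q x : ℝ) : ℂ))
    exact_mod_cast h.symm
  -- sample points lie in [0,1]
  have hxmem : ∀ j ∈ Finset.range (N+1), ((β + (j:ℕ))/((N:ℝ)+1)) ∈ Set.Icc (0:ℝ) 1 := by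
    intro j hj
    obtain ⟨hb0, hb1⟩ := hβmem
    have hjN : (j:ℝ) ≤ N := by exact_mod_cast Nat.lt_succ_iff.mp (Finset.mem_range.mp hj)
    constructor
    · positivity
    · rw [div_le_one hNpos]; linarith
  -- Raabe for the sample sum
  have hraabe : ∑ j ∈ Finset.range (N+1), bernoulliPoly (n+1) ((β + (j:ℕ))/((N:ℝ)+1))
      = bernoulliPoly (n+1) β / ((N:ℝ)+1)^n := by
    have h := raabe (N+1) (n+1) (by omega) β
    push_cast at h
    rw [eq_div_iff (by positivity : ((N:ℝ)+1)^n ≠ 0)]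
    apply mul_left_cancel₀ (ne_of_gt hNpos)
    linear_combination h
  -- bound the sample sum
  have hsumle : ∑ j ∈ Finset.range (N+1), Q ((β + (j:ℕ))/((N:ℝ)+1))
      ≤ bernoulliPoly (n+1) β / ((N:ℝ)+1)^n := by
    rw [← hraabe]
    refine Finset.sum_le_sum (fun j hj => ?_)
    calc Q ((β + (j:ℕ))/((N:ℝ)+1)) ≤ bernoulliPer (n+1) ((β + (j:ℕ))/((N:ℝ)+1)) := hQle _
      _ = bernoulliPoly (n+1) ((β + (j:ℕ))/((N:ℝ)+1)) := per_eq hm1 (hxmem j hj)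
  -- conclude
  have hQint_le : (∫ x in (0:ℝ)..1, Q x) ≤ bernoulliPoly (n+1) β / ((N:ℝ)+1)^(n+1) := by
    have h1 : (∫ x in (0:ℝ)..1, Q x)
        = (∑ j ∈ Finset.range (N+1), Q ((β + (j:ℕ))/((N:ℝ)+1))) / ((N:ℝ)+1) := by
      rw [eq_div_iff (ne_of_gt hNpos)]
      linear_combination key
    rw [h1]
    rw [show bernoulliPoly (n+1) β / ((N:ℝ)+1)^(n+1)
        = (bernoulliPoly (n+1) β / ((N:ℝ)+1)^n) / ((N:ℝ)+1) by
      rw [div_div, ← pow_succ]]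
    gcongr
  rw [hint1, hsplit, bp_integral_zero n]
  rw [ge_iff_le, neg_div]
  linarith [hQint_le]
end

section
/- Let n ≥ 1, N ≥ 0 and M ≥ 1 be integers, let x_1, …, x_M ∈ ℝ, and suppose Q(x) = Σ_{|k|≤N} q_k e^{2πikx} and P(x) = Σ_{|k|≤N} p_k e^{2πikx} are real-valued trigonometric polynomials of degree at most N satisfying Q(x) ≤ 𝓑_{n+1}(x) ≤ P(x) for all x ∈ ℝ. Then for every y ∈ ℝ, |Σ_{m=1}^{M} 𝓑_{n+1}(x_m − y)| ≤ max( M·|q_0| + Σ_{0<|k|≤N} |q_k|·|Σ_{m=1}^{M} e^{2πikx_m}| , M·|p_0| + Σ_{0<|k|≤N} |p_k|·|Σ_{m=1}^{M} e^{2πikx_m}| ). In particular, the generalized discrepancy sup_{y∈ℝ} |Σ_{m=1}^{M} 𝓑_{n+1}(x_m − y)| is bounded by the right-hand side. -/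
open MeasureTheory

lemma trig_sum_bound (N M : ℕ) (x : Fin M → ℝ) (r : ℤ → ℂ) (R : ℝ → ℝ)
    (hR : ∀ t : ℝ, (R t : ℂ) = ∑ k ∈ Finset.Icc (-(N : ℤ)) (N : ℤ),
      r k * Complex.exp (2 * (Real.pi : ℂ) * Complex.I * (k : ℂ) * (t : ℂ)))
    (y : ℝ) :
    |∑ m : Fin M, R (x m - y)| ≤
      (M : ℝ) * ‖r 0‖ +
        ∑ k ∈ (Finset.Icc (-(N : ℤ)) (N : ℤ)).erase 0,
          ‖r k‖ *
            ‖∑ m : Fin M,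
              Complex.exp (2 * (Real.pi : ℂ) * Complex.I * (k : ℂ) * ((x m : ℝ) : ℂ))‖ := by
  have h0 : (0 : ℤ) ∈ Finset.Icc (-(N : ℤ)) (N : ℤ) := by
    simp [Finset.mem_Icc]
  have key : ((∑ m : Fin M, R (x m - y)) : ℂ) =
      ∑ k ∈ Finset.Icc (-(N : ℤ)) (N : ℤ),
        r k * Complex.exp (-(2 * (Real.pi : ℂ) * Complex.I * (k : ℂ) * (y : ℂ))) *
          (∑ m : Fin M, Complex.exp (2 * (Real.pi : ℂ) * Complex.I * (k : ℂ) * ((x m : ℝ) : ℂ))) := by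
    push_cast
    simp only [hR]
    rw [Finset.sum_comm]
    congr 1
    ext k
    rw [Finset.mul_sum]
    congr 1
    ext m
    rw [mul_assoc (r k), ← Complex.exp_add]
    congr 2
    push_cast
    ring
  have habs : |∑ m : Fin M, R (x m - y)| =
      ‖((∑ m : Fin M, R (x m - y) : ℝ) : ℂ)‖ := by
    rw [Complex.norm_real, Real.norm_eq_abs]
  rw [habs, Complex.ofReal_sum, key]
  calc ‖_‖ ≤ ∑ k ∈ Finset.Icc (-(N : ℤ)) (N : ℤ),
        ‖r k * Complex.exp (-(2 * (Real.pi : ℂ) * Complex.I * (k : ℂ) * (y : ℂ))) *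
          (∑ m : Fin M, Complex.exp (2 * (Real.pi : ℂ) * Complex.I * (k : ℂ) * ((x m : ℝ) : ℂ)))‖ :=
        norm_sum_le _ _
    _ ≤ _ := by
      rw [← Finset.add_sum_erase _ _ h0]
      gcongr with k hk
      · -- k = 0 term
        have he : ‖Complex.exp (-(2 * (Real.pi : ℂ) * Complex.I * ((0:ℤ) : ℂ) * (y : ℂ)))‖ = 1 := by
          simp
        have hs : (∑ m : Fin M, Complex.exp (2 * (Real.pi : ℂ) * Complex.I * ((0:ℤ) : ℂ) * ((x m : ℝ) : ℂ))) = (M : ℂ) := by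
          simp
        rw [norm_mul, norm_mul, he, hs, mul_one]
        simp [mul_comm]
      · -- other terms
        have : ‖Complex.exp (-(2 * (Real.pi : ℂ) * Complex.I * (k : ℂ) * (y : ℂ)))‖ = 1 := by
          rw [Complex.norm_exp]
          have : (-(2 * (Real.pi : ℂ) * Complex.I * (k : ℂ) * (y : ℂ))).re = 0 := by
            simp [Complex.mul_re, Complex.mul_im]
          rw [this, Real.exp_zero]
        rw [norm_mul, norm_mul, this, mul_one]

theorem erdos_turan_type_bound (n N M : ℕ) (hn : 1 ≤ n) (hM : 1 ≤ M)
    (x : Fin M → ℝ) (q p : ℤ → ℂ) (Q P : ℝ → ℝ)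
    (hQ : ∀ t : ℝ, (Q t : ℂ) = ∑ k ∈ Finset.Icc (-(N : ℤ)) (N : ℤ),
      q k * Complex.exp (2 * (Real.pi : ℂ) * Complex.I * (k : ℂ) * (t : ℂ)))
    (hP : ∀ t : ℝ, (P t : ℂ) = ∑ k ∈ Finset.Icc (-(N : ℤ)) (N : ℤ),
      p k * Complex.exp (2 * (Real.pi : ℂ) * Complex.I * (k : ℂ) * (t : ℂ)))
    (hQle : ∀ t : ℝ, Q t ≤ bernoulliPer (n + 1) t)
    (hPge : ∀ t : ℝ, bernoulliPer (n + 1) t ≤ P t) :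
    ∀ y : ℝ, |∑ m : Fin M, bernoulliPer (n + 1) (x m - y)| ≤
      max
        ((M : ℝ) * ‖q 0‖ +
          ∑ k ∈ (Finset.Icc (-(N : ℤ)) (N : ℤ)).erase 0,
            ‖q k‖ *
              ‖∑ m : Fin M,
                Complex.exp (2 * (Real.pi : ℂ) * Complex.I * (k : ℂ) * ((x m : ℝ) : ℂ))‖)
        ((M : ℝ) * ‖p 0‖ +
          ∑ k ∈ (Finset.Icc (-(N : ℤ)) (N : ℤ)).erase 0,
            ‖p k‖ *
              ‖∑ m : Fin M,
                Complex.exp (2 * (Real.pi : ℂ) * Complex.I * (k : ℂ) * ((x m : ℝ) : ℂ))‖) := by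
  intro y
  have hQb := trig_sum_bound N M x q Q hQ y
  have hPb := trig_sum_bound N M x p P hP y
  rw [abs_le]
  constructor
  · refine le_trans ?_ (Finset.sum_le_sum fun m _ => hQle (x m - y))
    refine le_trans (neg_le_neg (le_max_left _ _)) ?_
    refine le_trans (neg_le_neg hQb) ?_
    exact neg_abs_le _
  · refine le_trans (Finset.sum_le_sum fun m _ => hPge (x m - y)) ?_
    exact le_trans (le_trans (le_abs_self _) hPb) (le_max_right _ _)
end
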